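/- Let n ≥ 1, r ≥ 1, and let c ∈ ℝ^n define the hyperplane h = {x ∈ ℝ^n : ∑_{i=1}^n c_i x_i = 1} with weight w(h) > 1 − r/n. Then the number of indices i with c_i ∉ ℤ is at most 2r² − 1. -/

import Mathlib

open scoped Classical in
/-- The Clifton–Huang weight of the hyperplane `{x : ∑ i, c i * x i = 1}`:
the sum over nonempty subsets `S ⊆ [n]` with `∑_{i ∈ S} c i = 1` of
`1 / (|S| * binom(n, |S|))`. -/
noncomputable def hyperplaneWeight {n : ℕ} (c : Fin n → ℝ) : ℝ :=
  ∑ S : Finset (Fin n),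
    if S.Nonempty ∧ ∑ i ∈ S, c i = 1 then
      1 / (S.card * (n.choose S.card)) else 0

open scoped Classical

namespace CH

/-- partial sum of first `q` entries -/
noncomputable def S (v : List ℝ) (q : ℕ) : ℝ := (v.take q).sum

/-- A list is *good* if no proper nonempty prefix sums to 1. -/
def GoodL (v : List ℝ) : Prop := ∀ k, 0 < k → k < v.length → (v.take k).sum ≠ 1

lemma S_zero (v : List ℝ) : S v 0 = 0 := by simp [S]

lemma S_length (v : List ℝ) : S v v.length = v.sum := by simp [S]

lemma S_take_add (v : List ℝ) (p m : ℕ) :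
    S v (p + m) = S v p + ((v.drop p).take m).sum := by
  simp [S, List.take_add]

lemma rot_take_sum_low (v : List ℝ) {p m : ℕ} (hp : p ≤ v.length)
    (hm : m ≤ v.length - p) :
    ((v.rotate p).take m).sum = S v (p + m) - S v p := by
  rw [List.rotate_eq_drop_append_take hp,
    List.take_append_of_le_length (by simpa using hm), S_take_add]
  ring

lemma rot_take_sum_high (v : List ℝ) {p m : ℕ} (hp : p ≤ v.length)
    (hm : v.length - p ≤ m) (hm' : m ≤ v.length) :
    ((v.rotate p).take m).sum = v.sum - S v p + S v (m - (v.length - p)) := by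
  rw [List.rotate_eq_drop_append_take hp]
  set k := m - (v.length - p) with hk
  have hlen : (v.drop p).length = v.length - p := by simp
  have hm2 : m = (v.drop p).length + k := by omega
  have hkp : k ≤ p := by omega
  rw [hm2, List.take_append, List.sum_append]
  have h1 : (v.drop p).sum = v.sum - S v p := by
    have h0 := S_take_add v p (v.length - p)
    have hpl : p + (v.length - p) = v.length := by omega
    rw [hpl, S_length] at h0
    have h0' : ((v.drop p).take (v.length - p)).sum = v.sum - S v p := by linarith
    rwa [List.take_of_length_le (le_of_eq hlen)] at h0'
  have h2 : ((v.take p).take k).sum = S v k := by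
    rw [List.take_take, min_eq_left hkp]; rfl
  rw [List.take_of_length_le (l := v.drop p) (Nat.le_add_right _ _), Nat.add_sub_cancel_left, h1, h2]

lemma good_rotate (v : List ℝ) (hv : v.sum = 1) (p : ℕ) (hp : p < v.length)
    (h1 : ∀ q, p < q → q < v.length → S v q ≠ S v p + 1)
    (h2 : p ≠ 0 → S v p ≠ 0)
    (h3 : ∀ q, 0 < q → q < p → S v q ≠ S v p) :
    GoodL (v.rotate p) := by
  intro k hk hklen hcon
  rw [List.length_rotate] at hklen
  by_cases hcase : k ≤ v.length - p
  · rw [rot_take_sum_low v hp.le hcase] at hcon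
    have hq : S v (p + k) = S v p + 1 := by linarith
    rcases lt_or_eq_of_le (show p + k ≤ v.length by omega) with h | h
    · exact h1 (p + k) (by omega) h hq
    · -- p + k = v.length, so S v (p+k) = 1, S v p = 0, and p ≠ 0 since k < v.length
      rw [h, S_length, hv] at hq
      have hp0 : p ≠ 0 := by omega
      exact h2 hp0 (by linarith)
  · push_neg at hcase
    rw [rot_take_sum_high v hp.le hcase.le hklen.le] at hcon
    rw [hv] at hcon
    have hq : S v (k - (v.length - p)) = S v p := by linarith
    exact h3 (k - (v.length - p)) (by omega) (by omega) hq


/-- In every ℤ-coset class of partial sums there is a good rotation start,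
namely the earliest attainment of the class maximum. -/
lemma exists_good_in_class (v : List ℝ) (hv : v.sum = 1) (q₀ : ℕ) (hq₀ : q₀ < v.length) :
    ∃ p, p < v.length ∧ GoodL (v.rotate p) ∧ ∃ z : ℤ, S v p - S v q₀ = (z : ℝ) := by
  set Cl := (Finset.range v.length).filter
    (fun q => ∃ z : ℤ, S v q - S v q₀ = (z : ℝ)) with hCl
  have hq₀Cl : q₀ ∈ Cl := by
    simp only [hCl, Finset.mem_filter, Finset.mem_range]
    exact ⟨hq₀, ⟨0, by simp⟩⟩
  have hClne : Cl.Nonempty := ⟨q₀, hq₀Cl⟩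
  obtain ⟨qm, hqmCl, hqmmax⟩ := Cl.exists_max_image (S v) hClne
  set B := Cl.filter (fun q => S v q = S v qm) with hB
  have hBne : B.Nonempty := ⟨qm, by simp [hB, hqmCl]⟩
  set p := B.min' hBne with hp
  have hpB : p ∈ B := B.min'_mem hBne
  have hpCl : p ∈ Cl := (Finset.mem_filter.1 hpB).1
  have hpmaxval : S v p = S v qm := (Finset.mem_filter.1 hpB).2
  have hplt : p < v.length := Finset.mem_range.1 (Finset.mem_filter.1 hpCl).1
  have hpz : ∃ z : ℤ, S v p - S v q₀ = (z : ℝ) := (Finset.mem_filter.1 hpCl).2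
  have hmax : ∀ q ∈ Cl, S v q ≤ S v p := by
    intro q hq; rw [hpmaxval]; exact hqmmax q hq
  have hfirst : ∀ q ∈ Cl, S v q = S v p → p ≤ q := by
    intro q hq hval
    exact B.min'_le q (by simp [hB, hq, hval, hpmaxval])
  obtain ⟨z₀, hz₀⟩ := hpz
  refine ⟨p, hplt, ?_, ⟨z₀, hz₀⟩⟩
  apply good_rotate v hv p hplt
  · -- no later q with S q = S p + 1
    intro q hpq hqlen hcon
    have hqCl : q ∈ Cl := by
      simp only [hCl, Finset.mem_filter, Finset.mem_range]
      exact ⟨hqlen, ⟨z₀ + 1, by rw [hcon]; push_cast; linarith⟩⟩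
    have := hmax q hqCl
    rw [hcon] at this; linarith
  · -- p ≠ 0 → S v p ≠ 0
    intro hp0 hcon
    have h0Cl : (0 : ℕ) ∈ Cl := by
      simp only [hCl, Finset.mem_filter, Finset.mem_range]
      refine ⟨by omega, ⟨z₀, ?_⟩⟩
      have hS0 : S v 0 = 0 := by simp [S]
      rw [hS0, ← hz₀, hcon]
    have h0val : S v 0 = S v p := by
      have hS0 : S v 0 = 0 := by simp [S]
      rw [hS0, hcon]
    have := hfirst 0 h0Cl h0val
    omega
  · -- no earlier q with S q = S p
    intro q hq0 hqp hcon
    have hqCl : q ∈ Cl := by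
      simp only [hCl, Finset.mem_filter, Finset.mem_range]
      exact ⟨by omega, ⟨z₀, by rw [hcon, hz₀]⟩⟩
    have := hfirst q hqCl hcon
    omega


/-- If some entry of `v` is non-integral, some proper partial sum is non-integral. -/
lemma exists_partial_notint (v : List ℝ) (hv : v.sum = 1)
    (ha : ∃ a ∈ v, ¬∃ z : ℤ, (z : ℝ) = a) :
    ∃ q, q < v.length ∧ ¬∃ z : ℤ, S v q = (z : ℝ) := by
  by_contra hcon
  push_neg at hcon
  obtain ⟨a, hav, hafrac⟩ := ha
  apply hafrac
  obtain ⟨⟨i, hi⟩, hget⟩ := List.mem_iff_get.1 hav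
  -- S v (i+1) - S v i = a, both are integral
  obtain ⟨z₁, hz₁⟩ := hcon i (by omega)
  have hEnd : ∀ q, q ≤ v.length → ∃ z : ℤ, S v q = (z : ℝ) := by
    intro q hq
    rcases lt_or_eq_of_le hq with h | h
    · exact hcon q h
    · refine ⟨1, ?_⟩; rw [h]; simp [S, hv]
  obtain ⟨z₂, hz₂⟩ := hEnd (i + 1) (by omega)
  refine ⟨z₂ - z₁, ?_⟩
  have : S v (i + 1) = S v i + a := by
    simp only [S]
    rw [List.sum_take_succ v i hi]
    simp [← hget]
  push_cast
  rw [hz₁, hz₂] at this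
  linarith

/-- at least two good rotations if `v` sums to 1 and has a non-integral entry -/
lemma two_good_rotations (v : List ℝ) (hv : v.sum = 1)
    (ha : ∃ a ∈ v, ¬∃ z : ℤ, (z : ℝ) = a) :
    2 ≤ ((Finset.range v.length).filter (fun k => GoodL (v.rotate k))).card := by
  have hlen : 0 < v.length := by
    obtain ⟨a, hav, _⟩ := ha
    exact List.length_pos_iff.2 (List.ne_nil_of_mem hav)
  obtain ⟨q₁, hq₁len, hq₁⟩ := exists_partial_notint v hv ha
  obtain ⟨p₁, hp₁len, hp₁good, z₁, hz₁⟩ := exists_good_in_class v hv 0 hlen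
  obtain ⟨p₂, hp₂len, hp₂good, z₂, hz₂⟩ := exists_good_in_class v hv q₁ hq₁len
  have hne : p₁ ≠ p₂ := by
    intro h
    apply hq₁
    have hS0 : S v 0 = 0 := by simp [S]
    rw [hS0] at hz₁
    refine ⟨z₁ - z₂, ?_⟩
    push_cast
    rw [← hz₂, ← h]
    linarith
  exact Finset.one_lt_card.2 ⟨p₁, by simp [Finset.mem_filter, hp₁len, hp₁good],
         p₂, by simp [Finset.mem_filter, hp₂len, hp₂good], hne⟩

/-- at least one good rotation always (v sums to 1, nonempty) -/
lemma one_good_rotation (v : List ℝ) (hv : v.sum = 1) (hne : v ≠ []) :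
    1 ≤ ((Finset.range v.length).filter (fun k => GoodL (v.rotate k))).card := by
  have hlen : 0 < v.length := List.length_pos_iff.2 hne
  obtain ⟨p, hplen, hpgood, _⟩ := exists_good_in_class v hv 0 hlen
  exact Finset.card_pos.2 ⟨p, by simp [Finset.mem_filter, hplen, hpgood]⟩


variable {n : ℕ} (c : Fin n → ℝ)

/-- all arrangements (orderings) of a finset -/
noncomputable def Arr (s : Finset (Fin n)) : Finset (List (Fin n)) :=
  s.toList.permutations.toFinset

lemma mem_Arr {s : Finset (Fin n)} {l : List (Fin n)} :
    l ∈ Arr s ↔ l.Perm s.toList := by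
  simp [Arr, List.mem_permutations]

lemma Arr_nodup {s : Finset (Fin n)} {l : List (Fin n)} (h : l ∈ Arr s) : l.Nodup :=
  ((mem_Arr.1 h).nodup_iff).2 s.nodup_toList

lemma toFinset_perm {l₁ l₂ : List (Fin n)} (h : l₁.Perm l₂) :
    l₁.toFinset = l₂.toFinset := by
  ext a; simp [h.mem_iff]

lemma Arr_toFinset {s : Finset (Fin n)} {l : List (Fin n)} (h : l ∈ Arr s) :
    l.toFinset = s := by
  rw [toFinset_perm (mem_Arr.1 h)]
  exact s.toList_toFinset

lemma Arr_length {s : Finset (Fin n)} {l : List (Fin n)} (h : l ∈ Arr s) :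
    l.length = s.card := by
  rw [(mem_Arr.1 h).length_eq, Finset.length_toList]

lemma card_Arr (s : Finset (Fin n)) : (Arr s).card = s.card.factorial := by
  rw [Arr, List.toFinset_card_of_nodup (List.nodup_permutations _ s.nodup_toList),
    List.length_permutations, Finset.length_toList]

/-- goodness of an arrangement w.r.t. c -/
def Goodc (l : List (Fin n)) : Prop := GoodL (l.map c)

noncomputable def goodArr (s : Finset (Fin n)) : Finset (List (Fin n)) :=
  (Arr s).filter (Goodc c)

lemma sum_map_of_mem_Arr {s : Finset (Fin n)} {l : List (Fin n)} (h : l ∈ Arr s) :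
    (l.map c).sum = s.sum c := by
  rw [List.Perm.sum_eq ((mem_Arr.1 h).map c)]
  exact Finset.sum_map_toList s c

/-- rotations are a bijection of Arr s preserving cardinality of good sets -/
lemma card_filter_rot (s : Finset (Fin n)) (k : ℕ) (hk : k ≤ s.card) :
    ((Arr s).filter (fun l => Goodc c (l.rotate k))).card = (goodArr c s).card := by
  refine Finset.card_bij' (fun l _ => l.rotate k)
    (fun l _ => l.rotate (s.card - k)) ?_ ?_ ?_ ?_
  · intro l hl
    have hmem : l ∈ Arr s := (Finset.mem_filter.1 hl).1
    refine Finset.mem_filter.2 ⟨?_, (Finset.mem_filter.1 hl).2⟩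
    exact mem_Arr.2 ((List.rotate_perm l k).trans (mem_Arr.1 hmem))
  · intro l hl
    have hmem : l ∈ Arr s := (Finset.mem_filter.1 hl).1
    have hlen : l.length = s.card := Arr_length hmem
    have hrot : (l.rotate (s.card - k)).rotate k = l := by
      rw [List.rotate_rotate]
      have h2 : s.card - k + k = s.card := by omega
      rw [h2, ← hlen, List.rotate_length]
    refine Finset.mem_filter.2 ⟨?_, ?_⟩
    · exact mem_Arr.2 ((List.rotate_perm _ _).trans (mem_Arr.1 hmem))
    · rw [hrot]; exact (Finset.mem_filter.1 hl).2
  · intro l hl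
    have hmem : l ∈ Arr s := (Finset.mem_filter.1 hl).1
    have hlen : l.length = s.card := Arr_length hmem
    show (l.rotate k).rotate (s.card - k) = l
    rw [List.rotate_rotate]
    have h2 : k + (s.card - k) = s.card := by omega
    rw [h2, ← hlen, List.rotate_length]
  · intro l hl
    have hmem : l ∈ Arr s := (Finset.mem_filter.1 hl).1
    have hlen : l.length = s.card := Arr_length hmem
    show (l.rotate (s.card - k)).rotate k = l
    rw [List.rotate_rotate]
    have h2 : s.card - k + k = s.card := by omega
    rw [h2, ← hlen, List.rotate_length]

/-- main counting: if every arrangement has ≥ k₀ good rotations then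
    k₀ * (t-1)! ≤ #good arrangements -/
lemma goodArr_count (s : Finset (Fin n)) (hne : s.Nonempty) (k₀ : ℕ)
    (hk : ∀ l ∈ Arr s, k₀ ≤ ((Finset.range l.length).filter
        (fun k => Goodc c (l.rotate k))).card) :
    k₀ * (s.card - 1).factorial ≤ (goodArr c s).card := by
  have hcard : 0 < s.card := Finset.card_pos.2 hne
  have key : k₀ * s.card.factorial ≤ s.card * (goodArr c s).card := by
    calc k₀ * s.card.factorial = ∑ _l ∈ Arr s, k₀ := by
          rw [Finset.sum_const, card_Arr, smul_eq_mul, mul_comm]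
      _ ≤ ∑ l ∈ Arr s, ((Finset.range l.length).filter
            (fun k => Goodc c (l.rotate k))).card := Finset.sum_le_sum hk
      _ = ∑ l ∈ Arr s, ∑ k ∈ Finset.range s.card,
            (if Goodc c (l.rotate k) then 1 else 0) := by
          apply Finset.sum_congr rfl
          intro l hl
          rw [Arr_length hl, Finset.card_filter]
      _ = ∑ k ∈ Finset.range s.card, ∑ l ∈ Arr s,
            (if Goodc c (l.rotate k) then 1 else 0) := Finset.sum_comm
      _ = ∑ k ∈ Finset.range s.card, ((Arr s).filter
            (fun l => Goodc c (l.rotate k))).card := by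
          apply Finset.sum_congr rfl
          intro k _
          rw [Finset.card_filter]
      _ = ∑ k ∈ Finset.range s.card, (goodArr c s).card := by
          apply Finset.sum_congr rfl
          intro k hk'
          exact card_filter_rot c s k (Finset.mem_range.1 hk').le
      _ = s.card * (goodArr c s).card := by
          rw [Finset.sum_const, Finset.card_range, smul_eq_mul]
  have hfac : s.card.factorial = s.card * (s.card - 1).factorial := by
    conv_lhs => rw [show s.card = (s.card - 1) + 1 by omega]
    rw [Nat.factorial_succ]
    congr 1
    omega
  rw [hfac, ← mul_assoc, mul_comm k₀ s.card, mul_assoc] at key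
  exact Nat.le_of_mul_le_mul_left key hcard


/-- the global permutation space, as lists -/
noncomputable def P : Finset (List (Fin n)) := Arr (Finset.univ : Finset (Fin n))

/-- hitting times of a list -/
noncomputable def hitTimes (l : List (Fin n)) : Finset ℕ :=
  (Finset.range (l.length + 1)).filter
    (fun k => 0 < k ∧ ((l.take k).map c).sum = 1)

/-- x is the first-hit set of l -/
def FS (l : List (Fin n)) (x : Finset (Fin n)) : Prop :=
  ∃ k ∈ hitTimes c l, (∀ j ∈ hitTimes c l, k ≤ j) ∧ (l.take k).toFinset = x

lemma FS_unique {l : List (Fin n)} {x x' : Finset (Fin n)}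
    (h : FS c l x) (h' : FS c l x') : x = x' := by
  obtain ⟨k, hk, hmin, hx⟩ := h
  obtain ⟨k', hk', hmin', hx'⟩ := h'
  have : k = k' := le_antisymm (hmin k' hk') (hmin' k hk)
  rw [← hx, ← hx', this]

noncomputable def A (x : Finset (Fin n)) : Finset (List (Fin n)) :=
  (P (n := n)).filter (fun l => FS c l x)

lemma A_disjoint {x x' : Finset (Fin n)} (h : x ≠ x') :
    Disjoint (A c x) (A c x') := by
  rw [Finset.disjoint_left]
  intro l hl hl'
  exact h (FS_unique c (Finset.mem_filter.1 hl).2 (Finset.mem_filter.1 hl').2)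

/-- the key injection: good arrangement of x followed by arrangement of complement -/
lemma card_A_ge (x : Finset (Fin n)) (hx : x.Nonempty) (hsum : x.sum c = 1) :
    (goodArr c x).card * (Arr xᶜ).card ≤ (A c x).card := by
  rw [← Finset.card_product]
  apply Finset.card_le_card_of_injOn (fun p => p.1 ++ p.2)
  · rintro ⟨l₁, l₂⟩ hp
    dsimp only
    rw [Finset.mem_coe, Finset.mem_product] at hp
    obtain ⟨hl₁, hl₂⟩ := hp
    have hl₁A : l₁ ∈ Arr x := (Finset.mem_filter.1 hl₁).1
    have hl₁good : Goodc c l₁ := (Finset.mem_filter.1 hl₁).2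
    have hlen₁ : l₁.length = x.card := Arr_length hl₁A
    have hlen₂ : l₂.length = xᶜ.card := Arr_length hl₂
    have hnd₁ : l₁.Nodup := Arr_nodup hl₁A
    have hnd₂ : l₂.Nodup := Arr_nodup hl₂
    have htf₁ : l₁.toFinset = x := Arr_toFinset hl₁A
    have htf₂ : l₂.toFinset = xᶜ := Arr_toFinset hl₂
    have happ : (l₁ ++ l₂) ∈ P := by
      rw [P, mem_Arr]
      apply List.perm_of_nodup_nodup_toFinset_eq
      · rw [List.nodup_append]
        refine ⟨hnd₁, hnd₂, ?_⟩
        intro a ha₁ b ha₂ hab; subst hab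
        have h1 : a ∈ x := htf₁ ▸ List.mem_toFinset.2 ha₁
        have h2 : a ∈ xᶜ := htf₂ ▸ List.mem_toFinset.2 ha₂
        exact (Finset.mem_compl.1 h2) h1
      · exact Finset.univ.nodup_toList
      · rw [List.toFinset_append, htf₁, htf₂, Finset.union_compl,
          Finset.toList_toFinset]
    refine Finset.mem_filter.2 ⟨happ, ?_⟩
    -- first hit is at x.card
    have htake : (l₁ ++ l₂).take x.card = l₁ := by
      rw [← hlen₁]; exact List.take_left
    have hlenapp : (l₁ ++ l₂).length = x.card + xᶜ.card := by
      rw [List.length_append, hlen₁, hlen₂]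
    refine ⟨x.card, ?_, ?_, ?_⟩
    · rw [hitTimes, Finset.mem_filter, Finset.mem_range]
      refine ⟨by omega, Finset.card_pos.2 hx, ?_⟩
      rw [htake, sum_map_of_mem_Arr c hl₁A, hsum]
    · intro j hj
      by_contra hlt
      push_neg at hlt
      rw [hitTimes, Finset.mem_filter] at hj
      obtain ⟨_, hj0, hjsum⟩ := hj
      have hjtake : (l₁ ++ l₂).take j = l₁.take j :=
        List.take_append_of_le_length (by omega)
      rw [hjtake] at hjsum
      have hmaplen : (l₁.map c).length = x.card := by
        rw [List.length_map, hlen₁]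
      have hgood := hl₁good j hj0 (by omega)
      rw [← List.map_take] at hgood
      exact hgood hjsum
    · rw [htake, htf₁]
  · rintro ⟨l₁, l₂⟩ hp ⟨m₁, m₂⟩ hq heq
    dsimp only at heq
    simp only [Finset.mem_coe, Finset.mem_product] at hp hq
    have hlen₁ : l₁.length = x.card := Arr_length (Finset.mem_filter.1 hp.1).1
    have hlen₁' : m₁.length = x.card := Arr_length (Finset.mem_filter.1 hq.1).1
    have t1 : List.take x.card (l₁ ++ l₂) = l₁ := by
      rw [← hlen₁]; exact List.take_left
    have t1' : List.take x.card (m₁ ++ m₂) = m₁ := by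
      rw [← hlen₁']; exact List.take_left
    have t2 : List.drop x.card (l₁ ++ l₂) = l₂ := by
      rw [← hlen₁]; exact List.drop_left
    have t2' : List.drop x.card (m₁ ++ m₂) = m₂ := by
      rw [← hlen₁']; exact List.drop_left
    have h1 : l₁ = m₁ := by rw [← t1, ← t1', heq]
    have h2 : l₂ = m₂ := by rw [← t2, ← t2', heq]
    simp [h1, h2]


-- NEW MATERIAL --

/-- bridge: rotation-goodness counts transfer from value lists -/
lemma goodArr_lb_one (s : Finset (Fin n)) (hne : s.Nonempty) (hs : s.sum c = 1) :
    (s.card - 1).factorial ≤ (goodArr c s).card := by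
  have := goodArr_count c s hne 1 ?_
  · linarith
  
  intro l hl
  have hv : (l.map c).sum = 1 := by rw [sum_map_of_mem_Arr c hl, hs]
  have hvne : l.map c ≠ [] := by
    have hlne : l ≠ [] := by
      intro h
      have hlen := Arr_length hl
      rw [h, List.length_nil] at hlen
      have hpos := Finset.card_pos.2 hne
      omega
    simpa using hlne
  have h1 := one_good_rotation (l.map c) hv hvne
  have heq : ∀ k, GoodL ((l.map c).rotate k) ↔ Goodc c (l.rotate k) := by
    intro k
    rw [Goodc, List.map_rotate]
  calc 1 ≤ ((Finset.range (l.map c).length).filter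
        (fun k => GoodL ((l.map c).rotate k))).card := h1
    _ = ((Finset.range l.length).filter (fun k => Goodc c (l.rotate k))).card := by
        rw [List.length_map]
        apply Finset.card_bij (fun k _ => k)
        · intro k hk
          rw [Finset.mem_filter] at hk ⊢
          exact ⟨hk.1, (heq k).1 hk.2⟩
        · intro a b ha hb h; exact h
        · intro k hk
          rw [Finset.mem_filter] at hk
          exact ⟨k, Finset.mem_filter.2 ⟨hk.1, (heq k).2 hk.2⟩, rfl⟩

lemma goodArr_lb_two (s : Finset (Fin n)) (hne : s.Nonempty) (hs : s.sum c = 1)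
    (hfrac : ∃ i ∈ s, ¬∃ z : ℤ, (z : ℝ) = c i) :
    2 * (s.card - 1).factorial ≤ (goodArr c s).card := by
  apply goodArr_count c s hne 2
  intro l hl
  have hv : (l.map c).sum = 1 := by rw [sum_map_of_mem_Arr c hl, hs]
  have hfrac' : ∃ a ∈ l.map c, ¬∃ z : ℤ, (z : ℝ) = a := by
    obtain ⟨i, his, hi⟩ := hfrac
    refine ⟨c i, ?_, hi⟩
    apply List.mem_map_of_mem
    rw [← List.mem_toFinset, Arr_toFinset hl]
    exact his
  have h2 := two_good_rotations (l.map c) hv hfrac'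
  have heq : ∀ k, GoodL ((l.map c).rotate k) ↔ Goodc c (l.rotate k) := by
    intro k
    rw [Goodc, List.map_rotate]
  calc 2 ≤ ((Finset.range (l.map c).length).filter
        (fun k => GoodL ((l.map c).rotate k))).card := h2
    _ = ((Finset.range l.length).filter (fun k => Goodc c (l.rotate k))).card := by
        rw [List.length_map]
        apply Finset.card_bij (fun k _ => k)
        · intro k hk
          rw [Finset.mem_filter] at hk ⊢
          exact ⟨hk.1, (heq k).1 hk.2⟩
        · intro a b ha hb h; exact h
        · intro k hk
          rw [Finset.mem_filter] at hk
          exact ⟨k, Finset.mem_filter.2 ⟨hk.1, (heq k).2 hk.2⟩, rfl⟩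

/-- head cohorts -/
noncomputable def H (i : Fin n) : Finset (List (Fin n)) :=
  (P (n := n)).filter (fun l => l.head? = some i)

lemma card_H (i : Fin n) : (H (n := n) i).card = (n - 1).factorial := by
  have : (H (n := n) i).card = (Arr ((Finset.univ : Finset (Fin n)).erase i)).card := by
    apply Finset.card_bij' (fun l _ => l.tail) (fun l _ => i :: l)
    · -- tail lands in Arr (univ.erase i)
      intro l hl
      obtain ⟨hlP, hlhead⟩ := Finset.mem_filter.1 hl
      have hnd : l.Nodup := Arr_nodup hlP
      have htf : l.toFinset = Finset.univ := Arr_toFinset hlP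
      match l, hlhead with
      | a :: t, hlhead =>
        have ha : a = i := by simpa using hlhead
        subst ha
        rw [mem_Arr]
        apply List.perm_of_nodup_nodup_toFinset_eq
        · exact (List.nodup_cons.1 hnd).2
        · exact Finset.nodup_toList _
        · rw [Finset.toList_toFinset]
          have hat : a ∉ t := (List.nodup_cons.1 hnd).1
          ext b
          simp only [List.mem_toFinset, Finset.mem_erase]
          constructor
          · intro hb
            refine ⟨?_, by simp⟩
            intro hba; rw [hba] at hb; exact hat hb
          · rintro ⟨hba, -⟩
            have : b ∈ (a :: t).toFinset := by rw [htf]; simp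
            simp only [List.toFinset_cons, Finset.mem_insert, List.mem_toFinset] at this
            rcases this with h | h
            · exact absurd h hba
            · exact h
    · -- cons lands in H i
      intro l hl
      have hnd : l.Nodup := Arr_nodup hl
      have htf : l.toFinset = Finset.univ.erase i := Arr_toFinset hl
      refine Finset.mem_filter.2 ⟨?_, by simp⟩
      rw [P, mem_Arr]
      apply List.perm_of_nodup_nodup_toFinset_eq
      · rw [List.nodup_cons]
        refine ⟨?_, hnd⟩
        intro hcon
        have : i ∈ Finset.univ.erase i := htf ▸ List.mem_toFinset.2 hcon
        simp at this
      · exact Finset.nodup_toList _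
      · rw [Finset.toList_toFinset, List.toFinset_cons, htf]
        simp [Finset.insert_erase]
    · intro l hl
      obtain ⟨hlP, hlhead⟩ := Finset.mem_filter.1 hl
      match l, hlhead with
      | a :: t, hlhead =>
        have ha : a = i := by simpa using hlhead
        subst ha
        rfl
    · intro l hl
      rfl
  rw [this, card_Arr]
  congr 1
  rw [Finset.card_erase_of_mem (Finset.mem_univ i), Finset.card_univ, Fintype.card_fin]

/-- the head of any member of A x belongs to x -/
lemma head_mem_A {x : Finset (Fin n)} {l : List (Fin n)} (hl : l ∈ A c x) :
    ∃ i ∈ x, l.head? = some i := by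
  obtain ⟨hlP, k, hk, hmin, hx⟩ := Finset.mem_filter.1 hl
  rw [hitTimes, Finset.mem_filter, Finset.mem_range] at hk
  obtain ⟨hklen, hk0, -⟩ := hk
  match l with
  | [] => simp at hklen; omega
  | a :: t =>
    refine ⟨a, ?_, rfl⟩
    rw [← hx]
    have : a ∈ (a :: t).take k := by
      match k, hk0 with
      | k + 1, _ => simp
    exact List.mem_toFinset.2 this


noncomputable def F1 : Finset (Finset (Fin n)) :=
  Finset.univ.filter (fun S : Finset (Fin n) => S.Nonempty ∧ ∑ i ∈ S, c i = 1)

def FracFree (x : Finset (Fin n)) : Prop := ∀ i ∈ x, ∃ m : ℤ, (m : ℝ) = c i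

variable {c}

noncomputable def wt (c : Fin n → ℝ) (x : Finset (Fin n)) : ℕ := if FracFree c x then 2 else 1

variable (c)

lemma step_A {x : Finset (Fin n)} (hx : x ∈ F1 c) :
    2 * ((x.card - 1).factorial * (n - x.card).factorial) ≤ wt c x * (A c x).card := by
  obtain ⟨-, hne, hsum⟩ := Finset.mem_filter.1 hx
  have hcompl : (Arr (xᶜ)).card = (n - x.card).factorial := by
    rw [card_Arr, Finset.card_compl, Fintype.card_fin]
  have hA := card_A_ge c x hne hsum
  rw [hcompl] at hA
  by_cases hff : FracFree c x
  · rw [wt, if_pos hff]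
    have h1 := goodArr_lb_one c x hne hsum
    calc 2 * ((x.card - 1).factorial * (n - x.card).factorial)
        ≤ 2 * ((goodArr c x).card * (n - x.card).factorial) := by
          apply Nat.mul_le_mul_left
          exact Nat.mul_le_mul_right _ h1
      _ ≤ 2 * (A c x).card := by
          apply Nat.mul_le_mul_left; exact hA
  · rw [wt, if_neg hff]
    have hfrac : ∃ i ∈ x, ¬∃ z : ℤ, (z : ℝ) = c i := by
      simp only [FracFree] at hff; push_neg at hff
      obtain ⟨i, hi, hfi⟩ := hff
      exact ⟨i, hi, by push_neg; exact hfi⟩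
    have h2 := goodArr_lb_two c x hne hsum hfrac
    calc 2 * ((x.card - 1).factorial * (n - x.card).factorial)
        = (2 * (x.card - 1).factorial) * (n - x.card).factorial := by ring
      _ ≤ (goodArr c x).card * (n - x.card).factorial :=
          Nat.mul_le_mul_right _ h2
      _ ≤ (A c x).card := hA
      _ = 1 * (A c x).card := (one_mul _).symm

/-- fiber decomposition of A x by head -/
lemma card_A_fiber (x : Finset (Fin n)) (hx : x ∈ F1 c) :
    (A c x).card = ∑ i : Fin n, ((A c x).filter (fun l => l.head? = some i)).card := by
  have h := Finset.card_eq_sum_card_fiberwise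
    (f := fun l : List (Fin n) => l.head?) (s := A c x)
    (t := Finset.univ.image some) ?_
  · rw [h, Finset.sum_image (by intro a _ b _ h; exact Option.some_injective _ h)]
  · intro l hl
    obtain ⟨i, -, hi⟩ := head_mem_A c hl
    show l.head? ∈ _
    rw [hi]
    exact Finset.mem_image_of_mem some (Finset.mem_univ i)

lemma step_B :
    ∑ x ∈ F1 c, wt c x * (A c x).card
      ≤ ∑ i : Fin n, (if (∃ m : ℤ, (m : ℝ) = c i) then 2 else 1) * (n - 1).factorial := by
  calc ∑ x ∈ F1 c, wt c x * (A c x).card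
      = ∑ x ∈ F1 c, ∑ i : Fin n,
          wt c x * ((A c x).filter (fun l => l.head? = some i)).card := by
        apply Finset.sum_congr rfl
        intro x hx
        rw [card_A_fiber c x hx, Finset.mul_sum]
    _ = ∑ i : Fin n, ∑ x ∈ F1 c,
          wt c x * ((A c x).filter (fun l => l.head? = some i)).card :=
        Finset.sum_comm
    _ ≤ ∑ i : Fin n, (if (∃ m : ℤ, (m : ℝ) = c i) then 2 else 1) * (n - 1).factorial := by
        apply Finset.sum_le_sum
        intro i _
        have hdisj : ∀ x ∈ F1 c, ∀ y ∈ F1 c, x ≠ y →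
            Disjoint ((A c x).filter (fun l => l.head? = some i))
                     ((A c y).filter (fun l => l.head? = some i)) := by
          intro x _ y _ hxy
          exact Finset.disjoint_filter_filter (A_disjoint c hxy)
        have hsum_le : ∑ x ∈ F1 c,
            ((A c x).filter (fun l => l.head? = some i)).card ≤ (n-1).factorial := by
          rw [← Finset.card_biUnion hdisj, ← card_H (n := n) i]
          apply Finset.card_le_card
          intro l hl
          rw [Finset.mem_biUnion] at hl
          obtain ⟨x, hx, hlx⟩ := hl
          rw [Finset.mem_filter] at hlx
          refine Finset.mem_filter.2 ⟨(Finset.mem_filter.1 hlx.1).1, hlx.2⟩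
        by_cases hint : ∃ m : ℤ, (m : ℝ) = c i
        · rw [if_pos hint]
          calc ∑ x ∈ F1 c, wt c x * ((A c x).filter (fun l => l.head? = some i)).card
              ≤ ∑ x ∈ F1 c, 2 * ((A c x).filter (fun l => l.head? = some i)).card := by
                apply Finset.sum_le_sum
                intro x _
                apply Nat.mul_le_mul_right
                simp only [wt]; split <;> omega
            _ = 2 * ∑ x ∈ F1 c, ((A c x).filter (fun l => l.head? = some i)).card := by
                rw [Finset.mul_sum]
            _ ≤ 2 * (n-1).factorial := by
                apply Nat.mul_le_mul_left; exact hsum_le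
        · rw [if_neg hint]
          calc ∑ x ∈ F1 c, wt c x * ((A c x).filter (fun l => l.head? = some i)).card
              ≤ ∑ x ∈ F1 c, 1 * ((A c x).filter (fun l => l.head? = some i)).card := by
                apply Finset.sum_le_sum
                intro x hx
                -- if x is FracFree the fiber is empty; otherwise wt = 1
                by_cases hff : FracFree c x
                · have : ((A c x).filter (fun l => l.head? = some i)).card = 0 := by
                    rw [Finset.card_eq_zero]
                    rw [Finset.filter_eq_empty_iff]
                    intro l hl hcon
                    obtain ⟨j, hjx, hj⟩ := head_mem_A c hl
                    rw [hj] at hcon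
                    have : j = i := by simpa using hcon
                    subst this
                    exact hint (hff j hjx)
                  rw [this]; simp
                · simp only [wt, if_neg hff]; exact le_refl _
            _ = 1 * ∑ x ∈ F1 c, ((A c x).filter (fun l => l.head? = some i)).card := by
                rw [Finset.mul_sum]
            _ ≤ 1 * (n-1).factorial := by
                apply Nat.mul_le_mul_left; exact hsum_le

/-- the key counting inequality -/
theorem key_nat :
    2 * ∑ x ∈ F1 c, (x.card - 1).factorial * (n - x.card).factorial
      ≤ (2 * n - (Finset.univ.filter
          (fun i : Fin n => ¬ ∃ m : ℤ, (m : ℝ) = c i)).card) * (n - 1).factorial := by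
  set f := (Finset.univ.filter (fun i : Fin n => ¬ ∃ m : ℤ, (m : ℝ) = c i)).card with hf
  calc 2 * ∑ x ∈ F1 c, (x.card - 1).factorial * (n - x.card).factorial
      = ∑ x ∈ F1 c, 2 * ((x.card - 1).factorial * (n - x.card).factorial) := by
        rw [Finset.mul_sum]
    _ ≤ ∑ x ∈ F1 c, wt c x * (A c x).card :=
        Finset.sum_le_sum (fun x hx => step_A c hx)
    _ ≤ ∑ i : Fin n, (if (∃ m : ℤ, (m : ℝ) = c i) then 2 else 1) * (n - 1).factorial :=
        step_B c
    _ = (∑ i : Fin n, (if (∃ m : ℤ, (m : ℝ) = c i) then 2 else 1)) * (n - 1).factorial := by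
        rw [Finset.sum_mul]
    _ = (2 * n - f) * (n - 1).factorial := by
        congr 1
        have h1 : (∑ i : Fin n, (if (∃ m : ℤ, (m : ℝ) = c i) then 2 else 1))
            = 2 * (Finset.univ.filter (fun i : Fin n => ∃ m : ℤ, (m : ℝ) = c i)).card
              + 1 * f := by
          rw [hf, ← Finset.sum_filter_add_sum_filter_not Finset.univ
            (fun i : Fin n => ∃ m : ℤ, (m : ℝ) = c i)]
          congr 1
          · rw [Finset.sum_congr rfl
              (fun i hi => if_pos (Finset.mem_filter.1 hi).2),
              Finset.sum_const, smul_eq_mul, mul_comm]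
          · rw [Finset.sum_congr rfl
              (fun i hi => if_neg (Finset.mem_filter.1 hi).2),
              Finset.sum_const, smul_eq_mul, mul_comm]
        have h2 : (Finset.univ.filter (fun i : Fin n => ∃ m : ℤ, (m : ℝ) = c i)).card + f = n := by
          rw [hf]
          rw [Finset.card_filter_add_card_filter_not]
          rw [Finset.card_univ, Fintype.card_fin]
        omega


lemma weight_eq_sum_F1 :
    hyperplaneWeight c = ∑ x ∈ F1 c, (1 : ℝ) / (x.card * (n.choose x.card)) := by
  rw [hyperplaneWeight, F1, Finset.sum_filter]

lemma term_eq (x : Finset (Fin n)) (hx : x ∈ F1 c) :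
    (1 : ℝ) / (x.card * (n.choose x.card))
      = ((x.card - 1).factorial * (n - x.card).factorial : ℕ) / (n.factorial : ℕ) := by
  obtain ⟨-, hne, -⟩ := Finset.mem_filter.1 hx
  have ht1 : 1 ≤ x.card := Finset.card_pos.2 hne
  have htn : x.card ≤ n := by
    simpa using Finset.card_le_card (Finset.subset_univ x)
  have hkey : (x.card * n.choose x.card) * ((x.card - 1).factorial * (n - x.card).factorial)
      = n.factorial := by
    have h := Nat.choose_mul_factorial_mul_factorial htn
    calc (x.card * n.choose x.card) * ((x.card - 1).factorial * (n - x.card).factorial)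
        = n.choose x.card * (x.card * (x.card - 1).factorial) * (n - x.card).factorial := by
          ring
      _ = n.choose x.card * x.card.factorial * (n - x.card).factorial := by
          congr 2
          conv_rhs => rw [show x.card = (x.card - 1) + 1 by omega]
          rw [Nat.factorial_succ]
          congr 1
          omega
      _ = n.factorial := h
  have hpos : (0 : ℝ) < (x.card * n.choose x.card : ℕ) := by
    have : 0 < x.card * n.choose x.card := by
      apply Nat.mul_pos (by omega)
      exact Nat.choose_pos htn
    exact_mod_cast this
  rw [← Nat.cast_mul]
  rw [div_eq_div_iff (ne_of_gt hpos)
    (by exact_mod_cast Nat.factorial_pos n : (0:ℝ) < (n.factorial : ℕ)).ne']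
  rw [one_mul]
  rw [← Nat.cast_mul]
  rw [← hkey]
  push_cast
  ring

/-- The central analytic bound: W ≤ 1 - f/(2n). -/
theorem weight_le (hn : 1 ≤ n) :
    hyperplaneWeight c ≤ 1 - ((Finset.univ.filter
      (fun i : Fin n => ¬ ∃ m : ℤ, (m : ℝ) = c i)).card : ℝ) / (2 * n) := by
  set f := (Finset.univ.filter (fun i : Fin n => ¬ ∃ m : ℤ, (m : ℝ) = c i)).card with hf
  have hfn : f ≤ n := by
    rw [hf]
    have := Finset.card_le_card (Finset.subset_univ
      (Finset.univ.filter (fun i : Fin n => ¬ ∃ m : ℤ, (m : ℝ) = c i)))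
    simpa using this
  have hW : hyperplaneWeight c
      = ((∑ x ∈ F1 c, (x.card - 1).factorial * (n - x.card).factorial : ℕ) : ℝ)
        / (n.factorial : ℝ) := by
    rw [weight_eq_sum_F1]
    rw [Finset.sum_congr rfl (term_eq c)]
    push_cast
    rw [Finset.sum_div]
  have hkey := key_nat c
  rw [← hf] at hkey
  -- cast to ℝ
  have hkeyR : 2 * ((∑ x ∈ F1 c, (x.card - 1).factorial * (n - x.card).factorial : ℕ) : ℝ)
      ≤ (2 * n - f : ℝ) * ((n-1).factorial : ℝ) := by
    calc 2 * ((∑ x ∈ F1 c, (x.card - 1).factorial * (n - x.card).factorial : ℕ) : ℝ)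
        = ((2 * ∑ x ∈ F1 c, (x.card - 1).factorial * (n - x.card).factorial : ℕ) : ℝ) := by
          push_cast; ring
      _ ≤ ((2 * n - f : ℕ) : ℝ) * ((n-1).factorial : ℝ) := by
          exact_mod_cast hkey
      _ = (2 * n - f : ℝ) * ((n-1).factorial : ℝ) := by
          congr 1
          have : f ≤ 2 * n := by omega
          push_cast [Nat.cast_sub this]
          ring
  have hnfacN : n.factorial = n * (n-1).factorial := by
    conv_lhs => rw [show n = (n - 1) + 1 by omega]
    rw [Nat.factorial_succ]
    congr 2
    omega
  have hnfac : (n.factorial : ℝ) = n * ((n-1).factorial : ℝ) := by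
    exact_mod_cast congrArg (Nat.cast (R := ℝ)) hnfacN
  have hfacpos : (0 : ℝ) < ((n-1).factorial : ℝ) := by
    exact_mod_cast Nat.factorial_pos (n-1)
  have hnpos : (0 : ℝ) < n := by exact_mod_cast hn
  rw [hW]
  rw [div_le_iff₀ (by rw [hnfac]; positivity)]
  have hgoal : (1 - (f : ℝ) / (2 * n)) * (n.factorial : ℝ)
      = ((2 * n - f : ℝ) / 2) * ((n-1).factorial : ℝ) := by
    rw [hnfac]
    field_simp
  rw [hgoal]
  linarith [hkeyR]


end CH

open scoped Classical in
theorem few_fractional_coefficients (n r : ℕ) (hn : 1 ≤ n) (hr : 1 ≤ r) (c : Fin n → ℝ)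
    (hw : 1 - (r : ℝ) / n < hyperplaneWeight c) :
    (Finset.univ.filter (fun i : Fin n => ¬ ∃ m : ℤ, (m : ℝ) = c i)).card ≤ 2 * r ^ 2 - 1 := by
  set f := (Finset.univ.filter (fun i : Fin n => ¬ ∃ m : ℤ, (m : ℝ) = c i)).card with hf
  have hle := CH.weight_le c hn
  rw [← hf] at hle
  have hnpos : (0 : ℝ) < n := by exact_mod_cast hn
  have h1 : 1 - (r : ℝ) / n < 1 - (f : ℝ) / (2 * n) := lt_of_lt_of_le hw hle
  have h2 : (f : ℝ) / (2 * n) < (r : ℝ) / n := by linarith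
  have h3 : (f : ℝ) < 2 * r := by
    have := (div_lt_div_iff₀ (by positivity) (by positivity)).1 h2
    -- f * n < r * (2 * n)
    nlinarith
  have h4 : f < 2 * r := by exact_mod_cast h3
  have h5 : 2 * r ≤ 2 * r ^ 2 := by nlinarith
  omega
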